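/- The set of primitive recursive functions ℕ → ℕ does not satisfy QF-AC₀₀: there exists a primitive recursive function β : ℕ → ℕ such that for every x there exists y with β (Nat.pair x y) = 0, yet there is no primitive recursive α : ℕ → ℕ with β (Nat.pair x (α x)) = 0 for all x. (For example, take β with β (Nat.pair x y) = 0 if and only if Nat.ack x x = y, using that the graph of the Ackermann function is primitive recursive while its diagonal is not primitive recursive.) -/

import Mathlib

open Nat.Partrec Code

/-- One step of a stack machine computing the Ackermann function. -/
def ackStep : List ℕ → ℕ ⊕ List ℕ
  | [] => Sum.inl 0
  | [v] => Sum.inl v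
  | n :: m :: s => Sum.inr (if m = 0 then (n + 1) :: s
      else if n = 0 then 1 :: (m - 1) :: s
      else (n - 1) :: m :: (m - 1) :: s)

lemma ackStep_primrec : Primrec ackStep := by
  have h2 : Primrec₂ fun (a : ℕ × List ℕ) (q : ℕ × List ℕ) =>
      (Sum.inr (if q.1 = 0 then (a.1 + 1) :: q.2
        else if a.1 = 0 then 1 :: (q.1 - 1) :: q.2
        else (a.1 - 1) :: q.1 :: (q.1 - 1) :: q.2) : ℕ ⊕ List ℕ) := by
    have hn : Primrec fun p : (ℕ × List ℕ) × ℕ × List ℕ => p.1.1 :=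
      Primrec.fst.comp Primrec.fst
    have hm : Primrec fun p : (ℕ × List ℕ) × ℕ × List ℕ => p.2.1 :=
      Primrec.fst.comp Primrec.snd
    have hs : Primrec fun p : (ℕ × List ℕ) × ℕ × List ℕ => p.2.2 :=
      Primrec.snd.comp Primrec.snd
    have : Primrec fun p : (ℕ × List ℕ) × ℕ × List ℕ =>
        (Sum.inr (if p.2.1 = 0 then (p.1.1 + 1) :: p.2.2
          else if p.1.1 = 0 then 1 :: (p.2.1 - 1) :: p.2.2
          else (p.1.1 - 1) :: p.2.1 :: (p.2.1 - 1) :: p.2.2) : ℕ ⊕ List ℕ) := by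
      apply Primrec.sumInr.comp
      apply Primrec.ite (Primrec.eq.comp hm (Primrec.const 0))
      · exact Primrec.list_cons.comp (Primrec.succ.comp hn) hs
      · apply Primrec.ite (Primrec.eq.comp hn (Primrec.const 0))
        · exact Primrec.list_cons.comp (Primrec.const 1)
            (Primrec.list_cons.comp (Primrec.pred.comp hm) hs)
        · exact Primrec.list_cons.comp (Primrec.pred.comp hn)
            (Primrec.list_cons.comp hm
              (Primrec.list_cons.comp (Primrec.pred.comp hm) hs))
    exact this
  have h1 := Primrec.list_casesOn (f := fun a : ℕ × List ℕ => a.2)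
    (g := fun a : ℕ × List ℕ => (Sum.inl a.1 : ℕ ⊕ List ℕ))
    (h := fun (a : ℕ × List ℕ) (q : ℕ × List ℕ) =>
      (Sum.inr (if q.1 = 0 then (a.1 + 1) :: q.2
        else if a.1 = 0 then 1 :: (q.1 - 1) :: q.2
        else (a.1 - 1) :: q.1 :: (q.1 - 1) :: q.2) : ℕ ⊕ List ℕ))
    Primrec.snd (Primrec.sumInl.comp Primrec.fst) h2
  have h1' : Primrec₂ fun (_ : List ℕ) (a : ℕ × List ℕ) =>
      (@List.casesOn ℕ (fun _ => ℕ ⊕ List ℕ) a.2 (Sum.inl a.1) fun m s =>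
        Sum.inr (if m = 0 then (a.1 + 1) :: s
          else if a.1 = 0 then 1 :: (m - 1) :: s
          else (a.1 - 1) :: m :: (m - 1) :: s)) := by
    have : Primrec fun p : List ℕ × (ℕ × List ℕ) =>
        (@List.casesOn ℕ (fun _ => ℕ ⊕ List ℕ) p.2.2 (Sum.inl p.2.1) fun m s =>
          Sum.inr (if m = 0 then (p.2.1 + 1) :: s
            else if p.2.1 = 0 then 1 :: (m - 1) :: s
            else (p.2.1 - 1) :: m :: (m - 1) :: s)) := by
      refine (h1.comp Primrec.snd).of_eq fun p => ?_
      rcases p with ⟨l, n, t⟩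
      rcases t with _ | ⟨m, s⟩ <;> rfl
    exact this
  have h0 := Primrec.list_casesOn (f := @id (List ℕ))
    (g := fun _ : List ℕ => (Sum.inl 0 : ℕ ⊕ List ℕ))
    (h := fun (_ : List ℕ) (a : ℕ × List ℕ) =>
      @List.casesOn ℕ (fun _ => ℕ ⊕ List ℕ) a.2 (Sum.inl a.1) fun m s =>
        Sum.inr (if m = 0 then (a.1 + 1) :: s
          else if a.1 = 0 then 1 :: (m - 1) :: s
          else (a.1 - 1) :: m :: (m - 1) :: s))
    Primrec.id (Primrec.const _) h1'
  refine h0.of_eq fun l => ?_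
  rcases l with _ | ⟨n, _ | ⟨m, s⟩⟩ <;> rfl

/-- The partial function iterated by `PFun.fix`. -/
noncomputable def ackFix : List ℕ →. ℕ := PFun.fix (fun l => Part.some (ackStep l))

lemma ackFix_step : ∀ (m n : ℕ) (s : List ℕ) (v : ℕ),
    v ∈ ackFix (ack m n :: s) → v ∈ ackFix (n :: m :: s) := by
  intro m
  induction m with
  | zero =>
    intro n s v hv
    have : ackFix (n :: 0 :: s) = ackFix ((n + 1) :: s) :=
      PFun.fix_fwd_eq (by simp [ackStep])
    simpa [this, ack] using hv
  | succ m ihm =>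
    intro n
    induction n with
    | zero =>
      intro s v hv
      have : ackFix (0 :: (m + 1) :: s) = ackFix (1 :: m :: s) :=
        PFun.fix_fwd_eq (by simp [ackStep])
      rw [this]
      exact ihm 1 s v (by simpa [ack] using hv)
    | succ n ihn =>
      intro s v hv
      have : ackFix ((n + 1) :: (m + 1) :: s) = ackFix (n :: (m + 1) :: m :: s) :=
        PFun.fix_fwd_eq (by simp [ackStep])
      rw [this]
      apply ihn (m :: s) v
      apply ihm (ack (m + 1) n) s v
      simpa [ack] using hv

lemma ackFix_eq (m n : ℕ) : ackFix [n, m] = Part.some (ack m n) := by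
  apply Part.eq_some_iff.2
  apply ackFix_step m n [] _
  exact PFun.fix_stop (by simp [ackStep])

lemma ack_diag_partrec : Nat.Partrec fun n => Part.some (ack n n) := by
  have h1 : Partrec (fun l : List ℕ => PFun.fix (fun l => Part.some (ackStep l)) l) :=
    Partrec.fix ackStep_primrec.to_comp
  have h2 : Partrec fun n : ℕ => ackFix [n, n] :=
    h1.comp (Primrec.list_cons.comp Primrec.id
      (Primrec.list_cons.comp Primrec.id (Primrec.const []))).to_comp
  have h3 : Partrec fun n : ℕ => Part.some (ack n n) := by
    refine h2.of_eq fun n => ?_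
    exact ackFix_eq n n
  exact Partrec.nat_iff.1 h3

/-- The primitive recursive functions do not satisfy QF-AC₀₀
(semantic content of Theorem 3.6 of the paper). -/
theorem primrec_not_satisfies_qfac00 :
    ∃ β : ℕ → ℕ, Primrec β ∧ (∀ x, ∃ y, β (Nat.pair x y) = 0) ∧
      ¬ ∃ α : ℕ → ℕ, Primrec α ∧ ∀ x, β (Nat.pair x (α x)) = 0 := by
  obtain ⟨c, hc⟩ := Code.exists_code.1 ack_diag_partrec
  refine ⟨fun z => Bool.rec 1 0 (Code.evaln z.unpair.2 c z.unpair.1).isSome, ?_, ?_, ?_⟩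
  · have hev : Primrec fun z : ℕ => (Code.evaln z.unpair.2 c z.unpair.1).isSome := by
      have := Code.primrec_evaln.comp
        (Primrec.pair
          (Primrec.pair (Primrec.snd.comp Primrec.unpair) (Primrec.const c))
          (Primrec.fst.comp Primrec.unpair))
      exact Primrec.option_isSome.comp this
    exact (Primrec.cond hev (Primrec.const 0) (Primrec.const 1)).of_eq fun z => by
      cases (Code.evaln z.unpair.2 c z.unpair.1).isSome <;> rfl
  · intro x
    have : ack x x ∈ Code.eval c x := by rw [hc]; exact Part.mem_some _
    obtain ⟨k, hk⟩ := Code.evaln_complete.1 this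
    refine ⟨k, ?_⟩
    show Bool.rec 1 0
      ((Code.evaln ((Nat.pair x k).unpair.2) c ((Nat.pair x k).unpair.1)).isSome) = (0 : ℕ)
    rw [Nat.unpair_pair]
    rw [Option.isSome_iff_exists.2 ⟨_, hk⟩]
  · rintro ⟨α, hα, hα0⟩
    have hg : Primrec fun x : ℕ => (Code.evaln (α x) c x).getD 0 := by
      have := Code.primrec_evaln.comp
        (Primrec.pair (Primrec.pair hα (Primrec.const c)) Primrec.id)
      exact Primrec.option_getD.comp this (Primrec.const 0)
    apply not_primrec_ack_self
    refine hg.of_eq fun x => ?_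
    have h0 := hα0 x
    simp only [Nat.unpair_pair] at h0
    have hsome : (Code.evaln (α x) c x).isSome = true := by
      by_contra h
      rw [Bool.not_eq_true] at h
      rw [h] at h0
      exact one_ne_zero h0
    obtain ⟨v, hv⟩ := Option.isSome_iff_exists.1 hsome
    have hve : v ∈ Code.eval c x := Code.evaln_sound (by exact hv)
    rw [hc] at hve
    have := Part.mem_some_iff.1 hve
    rw [hv, this]
    rfl
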